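/- Let a1, a4 be real with a1 ≠ 0, a4 ≠ 0, a1 ≠ a4, and a1 ≠ 2*a4, and set γ(x) = (1+a1*x)^(-(a1+2*a4)/a1). On the open region U = {(x,y) in R^2 : 1 + a1*x > 0}, the function H(x,y) = (1/2)*(1+a1*x)^(-2*a4/a1) * [ y^2 + (1+a1-a4)*(1+2*a4*x)/(a4*(a1-a4)*(a1-2*a4)) - x^2/(a1-a4) ] satisfies, for all (x,y) in U: ∂H/∂y(x,y) = γ(x)*y*(1+a1*x) and -∂H/∂x(x,y) = γ(x)*(-x + x^2 + a4*y^2). That is, H is a Hamiltonian for the time-rescaled reversible system dx/dτ = γ*(y + a1*x*y), dy/dτ = γ*(-x + x^2 + a4*y^2) on U. -/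

import Mathlib

/-- On U = {1 + a1*x > 0}, H is a Hamiltonian of the time-rescaled
reversible system dx/dτ = γ*(y + a1*x*y), dy/dτ = γ*(-x + x^2 + a4*y^2),
where γ(x) = (1+a1*x)^(-(a1+2a4)/a1). -/
theorem stmt_13 (a1 a4 : ℝ) (h1 : a1 ≠ 0) (h2 : a4 ≠ 0)
    (h3 : a1 ≠ a4) (h4 : a1 ≠ 2*a4)
    (γ : ℝ → ℝ) (hγ : ∀ x : ℝ, γ x = (1 + a1*x) ^ (-(a1 + 2*a4)/a1))
    (H : ℝ → ℝ → ℝ)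
    (hH : ∀ x y : ℝ, H x y = (1/2) * (1 + a1*x) ^ (-(2*a4)/a1) *
      (y^2 + (1 + a1 - a4)*(1 + 2*a4*x)/(a4*(a1 - a4)*(a1 - 2*a4))
        - x^2/(a1 - a4))) :
    ∀ x y : ℝ, 1 + a1*x > 0 →
      HasDerivAt (fun y' => H x y') (γ x * (y * (1 + a1*x))) y ∧
      HasDerivAt (fun x' => H x' y) (-(γ x * (-x + x^2 + a4*y^2))) x := by
  intro x y hx
  have ht0 : (1 + a1*x) ≠ 0 := ne_of_gt hx
  have h34 : a1 - a4 ≠ 0 := sub_ne_zero.mpr h3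
  have h24 : a1 - 2*a4 ≠ 0 := sub_ne_zero.mpr h4
  have hp : -(a1 + 2*a4)/a1 = -(2*a4)/a1 - 1 := by field_simp; ring
  have hγ' : γ x = (1 + a1*x) ^ (-(2*a4)/a1 - 1) := by rw [hγ, hp]
  have hts : (1 + a1*x) ^ (-(2*a4)/a1)
      = (1 + a1*x) ^ (-(2*a4)/a1 - 1) * (1 + a1*x) := by
    rw [← Real.rpow_add_one ht0]; ring_nf
  constructor
  · have hd : HasDerivAt (fun y' => (1/2) * (1 + a1*x) ^ (-(2*a4)/a1) *
        (y'^2 + (1 + a1 - a4)*(1 + 2*a4*x)/(a4*(a1 - a4)*(a1 - 2*a4))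
          - x^2/(a1 - a4)))
        ((1/2) * (1 + a1*x) ^ (-(2*a4)/a1) * (2*y)) y := by
      have h0 : HasDerivAt (fun y' : ℝ => y'^2
          + (1 + a1 - a4)*(1 + 2*a4*x)/(a4*(a1 - a4)*(a1 - 2*a4))
          - x^2/(a1 - a4)) (2*y) y := by
        simpa using ((hasDerivAt_pow 2 y).add_const ((1 + a1 - a4)*(1 + 2*a4*x)/(a4*(a1 - a4)*(a1 - 2*a4)))).sub_const (x^2/(a1 - a4))
      simpa using h0.const_mul ((1/2) * (1 + a1*x) ^ (-(2*a4)/a1))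
    have key : (1/2) * (1 + a1*x) ^ (-(2*a4)/a1) * (2*y)
        = γ x * (y * (1 + a1*x)) := by
      rw [hγ', hts]; ring
    rw [← key]
    simpa only [hH] using hd
  · have hlin : HasDerivAt (fun x' : ℝ => 1 + a1*x') a1 x := by
      simpa using ((hasDerivAt_id x).const_mul a1).const_add 1
    have f1 : HasDerivAt (fun x' : ℝ => (1 + a1*x') ^ (-(2*a4)/a1))
        (a1 * (-(2*a4)/a1) * (1 + a1*x) ^ (-(2*a4)/a1 - 1)) x :=
      hlin.rpow_const (Or.inl ht0)
    have f2 : HasDerivAt (fun x' : ℝ => y^2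
        + (1 + a1 - a4)*(1 + 2*a4*x')/(a4*(a1 - a4)*(a1 - 2*a4))
        - x'^2/(a1 - a4))
        ((1 + a1 - a4)*(2*a4)/(a4*(a1 - a4)*(a1 - 2*a4)) - 2*x/(a1 - a4)) x := by
      have ha : HasDerivAt (fun x' : ℝ =>
          (1 + a1 - a4)*(1 + 2*a4*x')/(a4*(a1 - a4)*(a1 - 2*a4)))
          ((1 + a1 - a4)*(2*a4)/(a4*(a1 - a4)*(a1 - 2*a4))) x := by
        have : HasDerivAt (fun x' : ℝ => (1 + a1 - a4)*(1 + 2*a4*x'))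
            ((1 + a1 - a4)*(2*a4)) x := by
          simpa using (((hasDerivAt_id x).const_mul (2*a4)).const_add 1).const_mul (1 + a1 - a4)
        exact this.div_const _
      have hb : HasDerivAt (fun x' : ℝ => x'^2/(a1 - a4)) (2*x/(a1 - a4)) x := by
        simpa using (hasDerivAt_pow 2 x).div_const (a1 - a4)
      exact (ha.const_add (y^2)).sub hb
    have hd := ((f1.const_mul (1/2)).mul f2)
    have key : (1/2) * (a1 * (-(2*a4)/a1) * (1 + a1*x) ^ (-(2*a4)/a1 - 1)) *
        (y^2 + (1 + a1 - a4)*(1 + 2*a4*x)/(a4*(a1 - a4)*(a1 - 2*a4)) - x^2/(a1 - a4))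
        + (1/2) * (1 + a1*x) ^ (-(2*a4)/a1) *
          ((1 + a1 - a4)*(2*a4)/(a4*(a1 - a4)*(a1 - 2*a4)) - 2*x/(a1 - a4))
        = -(γ x * (-x + x^2 + a4*y^2)) := by
      rw [hγ', hts]
      field_simp
      ring
    rw [← key]
    simpa only [hH, Pi.mul_def] using hd
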